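/- There exists a universal constant C > 0 such that for every real p ≥ 1, every integer W ≥ 1, and all integers a ≤ λ, the sum over integers b > λ of exp(−(b − a)^p / W^p) is at most C·W·exp(−(λ − a)^p / W^p). -/

import Mathlib

open Finset

lemma rpow_superadd {x y p : ℝ} (hx : 0 ≤ x) (hy : 0 ≤ y) (hp : 1 ≤ p) :
    x ^ p + y ^ p ≤ (x + y) ^ p := by
  have h := NNReal.add_rpow_le_rpow_add ⟨x, hx⟩ ⟨y, hy⟩ hp
  have h2 := NNReal.coe_le_coe.2 h
  push_cast [NNReal.coe_rpow] at h2
  exact h2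

/-- There is a universal constant `C > 0` such that for every real
`p ≥ 1`, every integer `W ≥ 1` and all integers `a ≤ λ`,
`Σ_{b > λ} exp(-(b-a)^p / W^p) ≤ C W exp(-(λ-a)^p / W^p)`. -/
theorem geometric_tail_sum :
    ∃ C : ℝ, 0 < C ∧ ∀ (p : ℝ), 1 ≤ p → ∀ (W : ℕ), 1 ≤ W →
      ∀ a lam : ℤ, a ≤ lam →
        ∑' b : {b : ℤ // lam < b},
            Real.exp (-(((b : ℤ) - a : ℤ) : ℝ) ^ p / (W : ℝ) ^ p) ≤
          C * W * Real.exp (-((lam - a : ℤ) : ℝ) ^ p / (W : ℝ) ^ p) := by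
  refine ⟨Real.exp 1, Real.exp_pos 1, ?_⟩
  intro p hp W hW a lam hal
  have hWpos : (0 : ℝ) < (W : ℝ) := by exact_mod_cast hW
  set r : ℝ := Real.exp (-(1 / (W : ℝ))) with hr
  have hr0 : 0 ≤ r := (Real.exp_pos _).le
  have hr1 : r < 1 := by
    apply Real.exp_lt_one_iff.2
    simp only [neg_lt, neg_zero]
    positivity
  have h1r : 0 < 1 - r := by linarith
  set M : ℝ := ((lam - a : ℤ) : ℝ) with hM
  have hM0 : 0 ≤ M := by
    have : (0 : ℤ) ≤ lam - a := by omega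
    rw [hM]
    exact_mod_cast this
  set E : ℝ := Real.exp (-M ^ p / (W : ℝ) ^ p) with hE
  have hEpos : 0 < E := Real.exp_pos _
  -- the equivalence ℕ ≃ {b : ℤ // lam < b}
  let e : ℕ ≃ {b : ℤ // lam < b} :=
    { toFun := fun n => ⟨lam + 1 + n, by omega⟩
      invFun := fun b => (b.1 - lam - 1).toNat
      left_inv := fun n => by simp only; omega
      right_inv := fun b => by
        have hb := b.2
        apply Subtype.ext
        simp only
        omega }
  set f : {b : ℤ // lam < b} → ℝ :=
    fun b => Real.exp (-(((b : ℤ) - a : ℤ) : ℝ) ^ p / (W : ℝ) ^ p) with hf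
  set g : ℕ → ℝ := fun n => (Real.exp 1 * E * r) * r ^ n with hg
  -- pointwise bound
  have hpt : ∀ n : ℕ, f (e n) ≤ g n := by
    intro n
    have hgeq : g n =
        Real.exp (1 + -M ^ p / (W : ℝ) ^ p + -(1 / (W : ℝ)) + n * -(1 / (W : ℝ))) := by
      rw [hg]
      simp only [hE, hr]
      rw [← Real.exp_nat_mul, ← Real.exp_add, ← Real.exp_add, ← Real.exp_add]
    rw [hgeq, hf]
    simp only
    apply Real.exp_le_exp.2
    have hcast : (((e n : ℤ) - a : ℤ) : ℝ) = M + ((n : ℝ) + 1) := by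
      show (((lam + 1 + (n : ℤ)) - a : ℤ) : ℝ) = M + ((n : ℝ) + 1)
      rw [hM]
      push_cast
      ring
    rw [hcast]
    set s : ℝ := ((n : ℝ) + 1) / (W : ℝ) with hs
    have hs0 : 0 ≤ s := by positivity
    have hWp : (0 : ℝ) < (W : ℝ) ^ p := Real.rpow_pos_of_pos hWpos p
    have key : M ^ p / (W : ℝ) ^ p + s ≤ (M + ((n : ℝ) + 1)) ^ p / (W : ℝ) ^ p + 1 := by
      have hdiv1 : M ^ p / (W : ℝ) ^ p = (M / (W : ℝ)) ^ p := by
        rw [Real.div_rpow hM0 hWpos.le]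
      have hdiv2 : (M + ((n : ℝ) + 1)) ^ p / (W : ℝ) ^ p = (M / (W : ℝ) + s) ^ p := by
        rw [hs, ← add_div, Real.div_rpow (by positivity) hWpos.le]
      rw [hdiv1, hdiv2]
      set t : ℝ := M / (W : ℝ) with ht
      have ht0 : 0 ≤ t := by positivity
      have h1 : t ^ p + s ^ p ≤ (t + s) ^ p := rpow_superadd ht0 hs0 hp
      have h2 : s ≤ s ^ p + 1 := by
        rcases le_or_gt s 1 with h | h
        · have : (0 : ℝ) ≤ s ^ p := Real.rpow_nonneg hs0 p
          linarith
        · have : s ^ (1 : ℝ) ≤ s ^ p := Real.rpow_le_rpow_of_exponent_le h.le hp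
          rw [Real.rpow_one] at this
          linarith
      linarith
    have hsval : (1 : ℝ) / (W : ℝ) + (n : ℝ) * (1 / (W : ℝ)) = s := by
      rw [hs]
      field_simp
      ring
    rw [← hsval] at key
    simp only [neg_div] at key ⊢
    linarith [key]
  have hg_summ : Summable g := (summable_geometric_of_lt_one hr0 hr1).mul_left _
  have hf_summ : Summable (f ∘ e) :=
    Summable.of_nonneg_of_le (fun n => (Real.exp_pos _).le) hpt hg_summ
  have hrW : r ≤ (W : ℝ) * (1 - r) := by
    have hexp : 1 / (W : ℝ) + 1 ≤ Real.exp (1 / (W : ℝ)) := Real.add_one_le_exp _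
    have hre : r * Real.exp (1 / (W : ℝ)) = 1 := by
      rw [hr, ← Real.exp_add]
      simp
    have h3 : r * (1 / (W : ℝ) + 1) ≤ r * Real.exp (1 / (W : ℝ)) :=
      mul_le_mul_of_nonneg_left hexp hr0
    rw [hre] at h3
    have h4 : r * (1 / (W : ℝ)) + r ≤ 1 := by linarith
    have h5 : r * (1 / (W : ℝ)) * (W : ℝ) = r := by field_simp
    nlinarith [hWpos]
  calc ∑' b : {b : ℤ // lam < b}, f b = ∑' n : ℕ, f (e n) := (e.tsum_eq f).symm
    _ ≤ ∑' n : ℕ, g n := Summable.tsum_le_tsum hpt hf_summ hg_summ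
    _ = (Real.exp 1 * E * r) * (1 - r)⁻¹ := by
        rw [hg, tsum_mul_left, tsum_geometric_of_lt_one hr0 hr1]
    _ ≤ (Real.exp 1 * E * ((W : ℝ) * (1 - r))) * (1 - r)⁻¹ := by
        apply mul_le_mul_of_nonneg_right _ (inv_nonneg.2 h1r.le)
        exact mul_le_mul_of_nonneg_left hrW (by positivity)
    _ = Real.exp 1 * (W : ℝ) * E * ((1 - r) * (1 - r)⁻¹) := by ring
    _ = Real.exp 1 * (W : ℝ) * E := by
        rw [mul_inv_cancel₀ (ne_of_gt h1r), mul_one]
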